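/- Let H be a free module over a commutative ℚ-algebra R, and let ∇ be an F-bundle connection on H ⊗ R[[t₁,…,t_n,u]] whose (T)-structure part is in framed form ∇_{∂_{t_i}} = ∂_{t_i} + u⁻¹T_i(t) with T_i independent of u, and ∇_{∂_u} = ∂_u + u⁻²U(t,u) with U(t,u) = ∑_{k≥0} U_{k−2}(t)u^k. If the flatness equations ∂_{t_i}U_k = −[T_i, U_{k+1}] hold for all k ≥ 0 and U_k(0) = 0 for all k ≥ 0, then U_k(t) = 0 for all k ≥ 0; that is, the framing of the (T)-structure is automatically a framing of the F-bundle provided it is one at t = 0. -/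

import Mathlib

/-!
A framing of the underlying (T)-structure of an F-bundle is automatically a framing of the
F-bundle provided it is one at `t = 0`: if the `u`-coefficients `U_k(t)` (`k ≥ 0`) of the
`u`-direction connection matrix satisfy the flatness equations `∂_{t_i}U_k = −[T_i, U_{k+1}]`
with `u`-independent (T)-structure matrices `T_i(t)`, and `U_k(0) = 0` for all `k`, then
`U_k(t) = 0` for all `k`.
-/

noncomputable section

/-- Auxiliary: in a module over a `ℚ`-algebra, nonzero natural scalars are injective. -/
lemma nsmul_eq_zero_aux {R M : Type*} [CommRing R] [Algebra ℚ R] [AddCommGroup M]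
    [Module R M] {c : ℕ} (hc : c ≠ 0) {x : M} (h : c • x = 0) : x = 0 := by
  have h' : (c : R) • x = 0 := by rw [Nat.cast_smul_eq_nsmul]; exact h
  have h2 := congrArg (fun y => (algebraMap ℚ R (c : ℚ)⁻¹) • y) h'
  simp only [smul_smul, smul_zero] at h2
  have hm : algebraMap ℚ R (c : ℚ)⁻¹ * (c : R) = 1 := by
    rw [show ((c : ℕ) : R) = algebraMap ℚ R (c : ℚ) by push_cast; simp, ← map_mul]
    rw [inv_mul_cancel₀ (by exact_mod_cast hc)]
    simp
  rwa [hm, one_smul] at h2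


/-- The formal partial derivative of a multivariate formal power series in the `i`-th
variable, defined coefficientwise. -/
def fpderiv {m : ℕ} {A : Type*} [Ring A] (i : Fin m) (f : MvPowerSeries (Fin m) A) :
    MvPowerSeries (Fin m) A :=
  fun k => ((k i : ℕ) + 1) • f (k + Finsupp.single i 1)

theorem stmt16 {n : ℕ} {R : Type*} [CommRing R] [Algebra ℚ R]
    {H : Type*} [AddCommGroup H] [Module R H] [Module.Free R H]
    (T : Fin n → MvPowerSeries (Fin n) (Module.End R H))
    (hcomm : ∀ i j, T i * T j = T j * T i)
    (hflat : ∀ i j, fpderiv i (T j) = fpderiv j (T i))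
    (U : ℕ → MvPowerSeries (Fin n) (Module.End R H))
    (hU : ∀ (i : Fin n) (k : ℕ),
      fpderiv i (U k) = -(T i * U (k + 1) - U (k + 1) * T i))
    (h0 : ∀ k, MvPowerSeries.constantCoeff (U k) = 0) :
    ∀ k, U k = 0 := by
  -- weight of a multi-index
  set w : (Fin n →₀ ℕ) → ℕ := fun d => ∑ j, d j with hw
  have key : ∀ m : ℕ, ∀ d : Fin n →₀ ℕ, w d = m → ∀ k, U k d = 0 := by
    intro m
    induction m using Nat.strong_induction_on with
    | _ m ih =>
      intro d hd k
      rcases Nat.eq_zero_or_pos m with hm | hm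
      · -- d = 0
        have hd0 : d = 0 := by
          ext j
          have := Finset.sum_eq_zero_iff.mp (hd.trans hm) j (Finset.mem_univ j)
          simpa using this
        subst hd0
        simpa [← MvPowerSeries.coeff_zero_eq_constantCoeff, MvPowerSeries.coeff_apply] using h0 k
      · -- pick i with d i ≠ 0
        have hex : ∃ i, d i ≠ 0 := by
          by_contra h
          push_neg at h
          have : w d = 0 := Finset.sum_eq_zero fun j _ => h j
          omega
        obtain ⟨i, hi⟩ := hex
        set d' : Fin n →₀ ℕ := d - Finsupp.single i 1 with hd'
        have hdd : d' + Finsupp.single i 1 = d := by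
          ext j
          rcases eq_or_ne j i with rfl | hj
          · simp [hd', Finsupp.single_apply]
            omega
          · simp [hd', Finsupp.single_apply, hj.symm]
        have hwd' : w d' + 1 = m := by
          have : w d' + w (Finsupp.single i 1) = w d := by
            rw [← hdd]
            simp [hw, Finsupp.add_apply, Finset.sum_add_distrib]
          have hws : w (Finsupp.single i 1) = 1 := by
            simp [hw, Finsupp.single_apply]
          omega
        have heq := congrFun (hU i k) d'
        have hL : fpderiv i (U k) d' = (d' i + 1) • U k d := by
          rw [fpderiv, hdd]
        -- RHS is zero: both products vanish coefficientwise by IH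
        have hP1 : (T i * U (k + 1)) d' = 0 := by
          have : MvPowerSeries.coeff d' (T i * U (k + 1)) = 0 := by
            rw [MvPowerSeries.coeff_mul]
            apply Finset.sum_eq_zero
            intro p hp
            have hp' := Finset.HasAntidiagonal.mem_antidiagonal.mp hp
            have hwp : w p.2 < m := by
              have : w p.1 + w p.2 = w d' := by
                rw [← hp']; simp [hw, Finsupp.add_apply, Finset.sum_add_distrib]
              omega
            have := ih (w p.2) (by omega) p.2 rfl (k + 1)
            simp [MvPowerSeries.coeff_apply, this]
          simpa [MvPowerSeries.coeff_apply] using this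
        have hP2 : (U (k + 1) * T i) d' = 0 := by
          have : MvPowerSeries.coeff d' (U (k + 1) * T i) = 0 := by
            rw [MvPowerSeries.coeff_mul]
            apply Finset.sum_eq_zero
            intro p hp
            have hp' := Finset.HasAntidiagonal.mem_antidiagonal.mp hp
            have hwp : w p.1 < m := by
              have : w p.1 + w p.2 = w d' := by
                rw [← hp']; simp [hw, Finsupp.add_apply, Finset.sum_add_distrib]
              omega
            have := ih (w p.1) (by omega) p.1 rfl (k + 1)
            simp [MvPowerSeries.coeff_apply, this]
          simpa [MvPowerSeries.coeff_apply] using this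
        have hR : (-(T i * U (k + 1) - U (k + 1) * T i)) d' = 0 := by
          have : MvPowerSeries.coeff d' (-(T i * U (k + 1) - U (k + 1) * T i)) = 0 := by
            rw [map_neg, map_sub]
            simp [MvPowerSeries.coeff_apply, hP1, hP2]
          simpa [MvPowerSeries.coeff_apply] using this
        rw [hL, hR] at heq
        exact nsmul_eq_zero_aux (R := R) (Nat.succ_ne_zero _) heq
  intro k
  apply MvPowerSeries.ext
  intro d
  rw [map_zero]
  simpa [MvPowerSeries.coeff_apply] using key (w d) d rfl k
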